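/- With V = (W + c·(tr W)·I_p)⁻¹, one has 1/(1+c) ≤ tr(V W) ≤ p/(1 + c p). -/

import Mathlib

open Matrix

/-- With `V = (W + c·(tr W)·I_p)⁻¹`, one has `1/(1+c) ≤ tr(V W) ≤ p/(1 + c p)`. -/
theorem trace_VW_bounds (p : ℕ) (hp : 1 ≤ p) (W : Matrix (Fin p) (Fin p) ℝ)
    (hW : W.PosSemidef) (htr : 0 < W.trace) (c : ℝ) (hc : 0 < c)
    (V : Matrix (Fin p) (Fin p) ℝ) (hV : V = (W + (c * W.trace) • 1)⁻¹) :
    1 / (1 + c) ≤ (V * W).trace ∧ (V * W).trace ≤ p / (1 + c * p) := by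
  classical
  have hH : W.IsHermitian := hW.1
  set t : ℝ := W.trace with ht
  set d : Fin p → ℝ := hH.eigenvalues with hd
  have hd0 : ∀ i, 0 ≤ d i := hW.eigenvalues_nonneg
  set U : Matrix (Fin p) (Fin p) ℝ := (hH.eigenvectorUnitary : Matrix (Fin p) (Fin p) ℝ)
    with hUdef
  have hUU : star U * U = 1 := Unitary.coe_star_mul_self _
  have hUU' : U * star U = 1 := Unitary.coe_mul_star_self _
  have hspec : W = U * diagonal d * star U := by
    have := hH.spectral_theorem
    rwa [RCLike.ofReal_real_eq_id, Function.id_comp] at this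
  have hconj : ∀ A B : Matrix (Fin p) (Fin p) ℝ,
      (U * A * star U) * (U * B * star U) = U * (A * B) * star U := by
    intro A B
    simp only [Matrix.mul_assoc]
    rw [← Matrix.mul_assoc (star U) U (B * star U), hUU, Matrix.one_mul]
  have htrconj : ∀ A : Matrix (Fin p) (Fin p) ℝ, (U * A * star U).trace = A.trace := by
    intro A
    rw [trace_mul_cycle, hUU, Matrix.one_mul]
  -- trace = sum of eigenvalues
  have hsum : ∑ i, d i = t := by
    have h2 : t = (diagonal d).trace := by
      conv_lhs => rw [ht, hspec]
      exact htrconj _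
    rw [h2, trace_diagonal]
  set e : Fin p → ℝ := fun i => d i + c * t with he
  have he0 : ∀ i, 0 < e i := fun i => by
    have := hd0 i; have : 0 < c * t := mul_pos hc htr; positivity
  have hM : W + (c * t) • 1 = U * diagonal e * star U := by
    have : diagonal e = diagonal d + (c * t) • 1 := by
      rw [smul_one_eq_diagonal, ← diagonal_add]
    rw [this, Matrix.mul_add, Matrix.add_mul, ← hspec]
    congr 1
    rw [Matrix.mul_smul, Matrix.mul_one, Matrix.smul_mul, hUU']
  have hVeq : V = U * diagonal (fun i => (e i)⁻¹) * star U := by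
    rw [hV, hM]
    apply inv_eq_right_inv
    rw [hconj, diagonal_mul_diagonal]
    have : (fun i => e i * (e i)⁻¹) = fun _ => (1 : ℝ) := by
      funext i; exact mul_inv_cancel₀ (he0 i).ne'
    rw [this, diagonal_one, Matrix.mul_one, hUU']
  have htrVW : (V * W).trace = ∑ i, d i / e i := by
    rw [hVeq, hspec, hconj, htrconj, diagonal_mul_diagonal, trace_diagonal]
    congr 1; funext i; rw [inv_mul_eq_div]
  have hdle : ∀ i, d i ≤ t := by
    intro i
    rw [← hsum]
    exact Finset.single_le_sum (fun j _ => hd0 j) (Finset.mem_univ i)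
  have hct : 0 < c * t := mul_pos hc htr
  have hp0 : (0 : ℝ) < p := by exact_mod_cast hp
  constructor
  · -- lower bound
    rw [htrVW]
    have h1 : ∀ i, d i / (t + c * t) ≤ d i / e i := by
      intro i
      apply div_le_div_of_nonneg_left (hd0 i) (he0 i)
      simp only [he]
      linarith [hdle i]
    calc 1 / (1 + c) = (∑ i, d i) / (t + c * t) := by
          rw [hsum]; field_simp
      _ = ∑ i, d i / (t + c * t) := by rw [Finset.sum_div]
      _ ≤ ∑ i, d i / e i := Finset.sum_le_sum fun i _ => h1 i
  · -- upper bound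
    rw [htrVW]
    have hrw : ∀ i, d i / e i = 1 - (c * t) / e i := by
      intro i
      rw [eq_sub_iff_add_eq, ← add_div]; exact (div_eq_one_iff_eq (he0 i).ne').mpr rfl
    have hCS : (p : ℝ) ^ 2 ≤ (∑ i, e i) * ∑ i, (e i)⁻¹ := by
      have := Finset.sum_sq_le_sum_mul_sum_of_sq_eq_mul (Finset.univ : Finset (Fin p))
        (r := fun _ => (1 : ℝ)) (f := e) (g := fun i => (e i)⁻¹)
        (fun i _ => (he0 i).le) (fun i _ => (inv_nonneg.mpr (he0 i).le))
        (fun i _ => by rw [one_pow, mul_inv_cancel₀ (he0 i).ne'])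
      simpa using this
    have hsume : ∑ i, e i = t * (1 + c * p) := by
      simp only [he, Finset.sum_add_distrib, hsum, Finset.sum_const, Finset.card_univ,
        Fintype.card_fin, nsmul_eq_mul]
      ring
    have hden : 0 < t * (1 + c * p) := by positivity
    have hinv : (p : ℝ) ^ 2 / (t * (1 + c * p)) ≤ ∑ i, (e i)⁻¹ := by
      rw [div_le_iff₀ hden] at *
      nlinarith [hCS, hsume, Finset.sum_nonneg (fun i (_ : i ∈ Finset.univ) =>
        (inv_nonneg.mpr (he0 i).le))]
    calc ∑ i, d i / e i = ∑ i, (1 - (c * t) / e i) := by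
          exact Finset.sum_congr rfl fun i _ => hrw i
      _ = p - (c * t) * ∑ i, (e i)⁻¹ := by
          rw [Finset.sum_sub_distrib, Finset.mul_sum]
          simp [div_eq_mul_inv]
      _ ≤ p - (c * t) * ((p : ℝ) ^ 2 / (t * (1 + c * p))) := by
          have := mul_le_mul_of_nonneg_left hinv hct.le
          linarith
      _ = p / (1 + c * p) := by
          have h1 : (0 : ℝ) < 1 + c * p := by positivity
          field_simp
          ring
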